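/- For τ > 0 and σ > 1, there exists C > 0 such that M_{p+q} ≤ C^{p^σ + q^σ} · N_p · N_q for all p, q ∈ ℕ, where M_p = p^{τ p^σ} and N_p = p^{2^{σ−1} τ p^σ} (with M_0 = N_0 = 1). -/

import Mathlib

lemma real_rpow_add_le_mul_rpow_add_rpow (x y : ℝ) (hx : 0 ≤ x) (hy : 0 ≤ y) {p : ℝ}
    (hp : 1 ≤ p) : (x + y) ^ p ≤ (2 : ℝ) ^ (p - 1) * (x ^ p + y ^ p) := by
  have h := NNReal.rpow_add_le_mul_rpow_add_rpow ⟨x, hx⟩ ⟨y, hy⟩ hp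
  have h2 := NNReal.coe_le_coe.2 h
  push_cast at h2
  convert h2 using 3 <;> rfl

/-- log(1+t) ≤ 1 + t^σ for t ≥ 0, σ ≥ 1. -/
lemma log_one_add_le (t σ : ℝ) (ht : 0 ≤ t) (hσ : 1 ≤ σ) :
    Real.log (1 + t) ≤ 1 + t ^ σ := by
  have h1 : Real.log (1 + t) ≤ t := by
    have := Real.log_le_sub_one_of_pos (x := 1 + t) (by linarith)
    linarith
  rcases le_or_gt t 1 with h | h
  · have : (0:ℝ) ≤ t ^ σ := Real.rpow_nonneg ht σ
    linarith
  · have h2 : t ^ (1:ℝ) ≤ t ^ σ := Real.rpow_le_rpow_of_exponent_le h.le hσ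
    rw [Real.rpow_one] at h2
    linarith

/-- Key log inequality: x^σ log(x+y) ≤ x^σ log x + (x^σ + y^σ). -/
lemma key_log (σ : ℝ) (hσ : 1 ≤ σ) (x y : ℝ) (hx : 1 ≤ x) (hy : 0 ≤ y) :
    x ^ σ * Real.log (x + y) ≤ x ^ σ * Real.log x + (x ^ σ + y ^ σ) := by
  have hx0 : (0:ℝ) < x := by linarith
  have hxσ : (0:ℝ) < x ^ σ := Real.rpow_pos_of_pos hx0 σ
  have hxy : x + y = x * (1 + y / x) := by field_simp
  rw [hxy, Real.log_mul hx0.ne' (by positivity), mul_add]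
  have h1 : Real.log (1 + y / x) ≤ 1 + (y / x) ^ σ := log_one_add_le _ σ (by positivity) hσ
  have h2 : (y / x) ^ σ = y ^ σ / x ^ σ := Real.div_rpow hy hx0.le σ
  have h3 : x ^ σ * Real.log (1 + y / x) ≤ x ^ σ * (1 + y ^ σ / x ^ σ) := by
    rw [← h2]; exact mul_le_mul_of_nonneg_left h1 hxσ.le
  have h4 : x ^ σ * (1 + y ^ σ / x ^ σ) = x ^ σ + y ^ σ := by field_simp
  linarith

/-- For τ > 0, σ > 1 there is C > 0 with M_{p+q} ≤ C^{p^σ+q^σ}·N_p·N_q, where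
    M_p = p^{τ p^σ}, N_p = p^{(2^{σ−1}τ) p^σ}, M_0 = N_0 = 1. -/
theorem stmt_6 (τ σ : ℝ) (hτ : 0 < τ) (hσ : 1 < σ) (M N : ℕ → ℝ)
    (hM0 : M 0 = 1) (hN0 : N 0 = 1)
    (hM : ∀ p : ℕ, 1 ≤ p → M p = (p : ℝ) ^ (τ * (p : ℝ) ^ σ))
    (hN : ∀ p : ℕ, 1 ≤ p → N p = (p : ℝ) ^ ((2 : ℝ) ^ (σ - 1) * τ * (p : ℝ) ^ σ)) :
    ∃ C : ℝ, 0 < C ∧ ∀ p q : ℕ,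
      M (p + q) ≤ C ^ ((p : ℝ) ^ σ + (q : ℝ) ^ σ) * N p * N q := by
  set a : ℝ := (2 : ℝ) ^ (σ - 1) * τ with ha_def
  have h2pos : (0:ℝ) < (2:ℝ) ^ (σ - 1) := Real.rpow_pos_of_pos (by norm_num) _
  have ha : 0 < a := mul_pos h2pos hτ
  have hτa : τ ≤ a := by
    have h1 : (1:ℝ) ≤ (2:ℝ) ^ (σ - 1) :=
      Real.one_le_rpow (by norm_num) (by linarith)
    nlinarith
  refine ⟨Real.exp (2 * a), Real.exp_pos _, ?_⟩
  have hC1 : (1:ℝ) ≤ Real.exp (2 * a) := Real.one_le_exp (by positivity)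
  have hMN : ∀ r : ℕ, M r ≤ N r := by
    intro r
    rcases Nat.eq_zero_or_pos r with hr | hr
    · subst hr; rw [hM0, hN0]
    · rw [hM r hr, hN r hr]
      have hr1 : (1:ℝ) ≤ (r:ℝ) := by exact_mod_cast hr
      apply Real.rpow_le_rpow_of_exponent_le hr1
      have : (0:ℝ) ≤ (r:ℝ) ^ σ := Real.rpow_nonneg (by linarith) σ
      nlinarith
  have hN1 : ∀ r : ℕ, (1:ℝ) ≤ N r := by
    intro r
    rcases Nat.eq_zero_or_pos r with hr | hr
    · subst hr; rw [hN0]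
    · rw [hN r hr]
      have hr1 : (1:ℝ) ≤ (r:ℝ) := by exact_mod_cast hr
      apply Real.one_le_rpow hr1
      have : (0:ℝ) ≤ (r:ℝ) ^ σ := Real.rpow_nonneg (by linarith) σ
      positivity
  have hCpow : ∀ t : ℝ, 0 ≤ t → (1:ℝ) ≤ Real.exp (2 * a) ^ t :=
    fun t ht => Real.one_le_rpow hC1 ht
  intro p q
  rcases Nat.eq_zero_or_pos p with hp | hp
  · subst hp
    simp only [Nat.zero_add, hN0, Nat.cast_zero]
    rw [Real.zero_rpow (by positivity : σ ≠ 0), zero_add]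
    calc M q ≤ N q := hMN q
      _ = 1 * 1 * N q := by ring
      _ ≤ Real.exp (2 * a) ^ ((q:ℝ) ^ σ) * 1 * N q := by
          have h1 := hCpow ((q:ℝ) ^ σ) (Real.rpow_nonneg (Nat.cast_nonneg q) σ)
          have h2 : (0:ℝ) < N q := lt_of_lt_of_le one_pos (hN1 q)
          nlinarith
  rcases Nat.eq_zero_or_pos q with hq | hq
  · subst hq
    simp only [Nat.add_zero, hN0, Nat.cast_zero]
    rw [Real.zero_rpow (by positivity : σ ≠ 0), add_zero]
    calc M p ≤ N p := hMN p
      _ = 1 * N p * 1 := by ring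
      _ ≤ Real.exp (2 * a) ^ ((p:ℝ) ^ σ) * N p * 1 := by
          have h1 := hCpow ((p:ℝ) ^ σ) (Real.rpow_nonneg (Nat.cast_nonneg p) σ)
          have h2 : (0:ℝ) < N p := lt_of_lt_of_le one_pos (hN1 p)
          nlinarith
  -- main case: p, q ≥ 1
  have hx1 : (1:ℝ) ≤ (p:ℝ) := by exact_mod_cast hp
  have hy1 : (1:ℝ) ≤ (q:ℝ) := by exact_mod_cast hq
  set x : ℝ := (p : ℝ) with hx_def
  set y : ℝ := (q : ℝ) with hy_def
  have hx0 : (0:ℝ) < x := by linarith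
  have hy0 : (0:ℝ) < y := by linarith
  have hxy0 : (0:ℝ) < x + y := by linarith
  have hxσ : (0:ℝ) ≤ x ^ σ := Real.rpow_nonneg hx0.le σ
  have hyσ : (0:ℝ) ≤ y ^ σ := Real.rpow_nonneg hy0.le σ
  rw [hM (p + q) (by omega), hN p hp, hN q hq]
  push_cast
  have e1 : (x + y) ^ (τ * (x + y) ^ σ) = Real.exp (τ * (x + y) ^ σ * Real.log (x + y)) := by
    rw [Real.rpow_def_of_pos hxy0]; ring_nf
  have e2 : x ^ (a * x ^ σ) = Real.exp (a * x ^ σ * Real.log x) := by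
    rw [Real.rpow_def_of_pos hx0]; ring_nf
  have e3 : y ^ (a * y ^ σ) = Real.exp (a * y ^ σ * Real.log y) := by
    rw [Real.rpow_def_of_pos hy0]; ring_nf
  have e4 : Real.exp (2 * a) ^ (x ^ σ + y ^ σ) = Real.exp (2 * a * (x ^ σ + y ^ σ)) := by
    rw [← Real.exp_mul]
  rw [e1, e2, e3, e4, ← Real.exp_add, ← Real.exp_add, Real.exp_le_exp]
  -- analytic core
  have hlog : 0 ≤ Real.log (x + y) := Real.log_nonneg (by linarith)
  have h1 : (x + y) ^ σ ≤ (2:ℝ) ^ (σ - 1) * (x ^ σ + y ^ σ) :=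
    real_rpow_add_le_mul_rpow_add_rpow x y hx0.le hy0.le hσ.le
  have s1 : τ * (x + y) ^ σ * Real.log (x + y) ≤ a * (x ^ σ + y ^ σ) * Real.log (x + y) := by
    apply mul_le_mul_of_nonneg_right _ hlog
    calc τ * (x + y) ^ σ ≤ τ * ((2:ℝ) ^ (σ - 1) * (x ^ σ + y ^ σ)) :=
          mul_le_mul_of_nonneg_left h1 hτ.le
      _ = a * (x ^ σ + y ^ σ) := by rw [ha_def]; ring
  have H1 := key_log σ hσ.le x y hx1 hy0.le
  have H2 := key_log σ hσ.le y x hy1 hx0.le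
  rw [add_comm y x] at H2
  have H1' := mul_le_mul_of_nonneg_left H1 ha.le
  have H2' := mul_le_mul_of_nonneg_left H2 ha.le
  nlinarith [s1, H1', H2']
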